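/- Let C ⊂ ℝ^n be a bounded open convex set. The Hilbert distance d_C is the length distance associated to the Finsler metric F_C: for all p, q ∈ C, d_C(p, q) equals the infimum, over all piecewise C^1 paths σ : [0,1] → C with σ(0) = p and σ(1) = q, of the length ∫_0^1 F_C(σ(t), σ'(t)) dt. -/

import Mathlib

open Classical

/-- The Hilbert distance of a convex domain `C`: for `p ≠ q`, the line through `p` and `q`
meets `∂C` at `a = p + t⁻ • (q - p)` and `b = p + t⁺ • (q - p)` where `t⁻ = sInf` and
`t⁺ = sSup` of the chord parameter set, so that the cross-ratio
`[a,p,q,b] = (‖q-a‖/‖p-a‖)·(‖p-b‖/‖q-b‖)` equals `((1-t⁻)/(-t⁻))·(t⁺/(t⁺-1))`,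
and `d_C(p,q) = (1/2)·log [a,p,q,b]`. -/
noncomputable def hilbertDist {E : Type*} [NormedAddCommGroup E] [NormedSpace ℝ E]
    (C : Set E) (p q : E) : ℝ :=
  if p = q then 0
  else ((1 : ℝ) / 2) * Real.log
    (((1 - sInf {t : ℝ | p + t • (q - p) ∈ C}) / (-sInf {t : ℝ | p + t • (q - p) ∈ C})) *
      (sSup {t : ℝ | p + t • (q - p) ∈ C} / (sSup {t : ℝ | p + t • (q - p) ∈ C} - 1)))

/-- The Finsler norm of a convex domain `C`: for `v ≠ 0`, the line `t ↦ p + t • v` meets `∂C`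
at the parameters `t⁻ = sInf` and `t⁺ = sSup` of the chord parameter set, with
`‖p - p⁻‖ = (-t⁻)·‖v‖` and `‖p - p⁺‖ = t⁺·‖v‖`, so that
`F_C(p,v) = (‖v‖/2)·(1/‖p-p⁻‖ + 1/‖p-p⁺‖) = (1/2)·(1/(-t⁻) + 1/t⁺)`.
(When the chord is unbounded on one side, the corresponding term is `0`.) -/
noncomputable def finslerNorm {E : Type*} [NormedAddCommGroup E] [NormedSpace ℝ E]
    (C : Set E) (p v : E) : ℝ :=
  if v = 0 then 0
  else ((1 : ℝ) / 2) *
    (1 / (-sInf {t : ℝ | p + t • v ∈ C}) + 1 / sSup {t : ℝ | p + t • v ∈ C})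


set_option maxHeartbeats 1000000

open Filter Topology MeasureTheory intervalIntegral Set

namespace HP

variable {E : Type*} [NormedAddCommGroup E] [NormedSpace ℝ E]

/-- chord parameter set -/
def chord (C : Set E) (x v : E) : Set ℝ := {t : ℝ | x + t • v ∈ C}

noncomputable def Bs (C : Set E) (x v : E) : ℝ := sSup (chord C x v)

noncomputable def psi (C : Set E) (x v : E) : ℝ := (Bs C x v)⁻¹

variable {C : Set E} {x v : E}

lemma chord_neg (C : Set E) (x v : E) : chord C x (-v) = -(chord C x v) := by
  ext t; simp [chord, Set.mem_neg, smul_neg, neg_smul]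

lemma neg_sInf_chord (C : Set E) (x v : E) :
    -sInf (chord C x v) = Bs C x (-v) := by
  rw [Bs, chord_neg, Real.sInf_def, neg_neg]

lemma bddAbove_chord (hbdd : Bornology.IsBounded C) (hv : v ≠ 0) :
    BddAbove (chord C x v) := by
  obtain ⟨R, hR⟩ := hbdd.subset_ball 0
  refine ⟨(R + ‖x‖) / ‖v‖, fun t ht => ?_⟩
  have h1 : ‖x + t • v‖ < R := by simpa [Metric.mem_ball, dist_eq_norm] using hR ht
  have h2 : ‖t • v‖ ≤ ‖x + t • v‖ + ‖x‖ := by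
    have := norm_add_le (x + t • v) (-x); simpa using this
  have hv' : (0:ℝ) < ‖v‖ := norm_pos_iff.2 hv
  have h3 : |t| * ‖v‖ ≤ R + ‖x‖ := by
    have : ‖t • v‖ = |t| * ‖v‖ := by rw [norm_smul, Real.norm_eq_abs]
    linarith [this ▸ h2]
  calc t ≤ |t| := le_abs_self t
  _ ≤ (R + ‖x‖) / ‖v‖ := (le_div_iff₀ hv').2 h3

lemma bddBelow_chord (hbdd : Bornology.IsBounded C) (hv : v ≠ 0) :
    BddBelow (chord C x v) := by
  have := bddAbove_chord (C := C) (x := x) (v := -v) hbdd (neg_ne_zero.2 hv)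
  rw [chord_neg] at this
  simpa using bddBelow_neg.2 this

lemma zero_mem_chord (hx : x ∈ C) : (0:ℝ) ∈ chord C x v := by simp [chord, hx]

lemma isOpen_chord (hopen : IsOpen C) : IsOpen (chord C x v) :=
  hopen.preimage (by continuity)

lemma lt_sSup_of_mem_isOpen {S : Set ℝ} (hS : IsOpen S) (hbdd : BddAbove S) {t : ℝ}
    (ht : t ∈ S) : t < sSup S := by
  obtain ⟨ε, hε, hball⟩ := Metric.isOpen_iff.1 hS t ht
  have : t + ε / 2 ∈ S := hball (by rw [Metric.mem_ball, Real.dist_eq]; rw [abs_of_nonneg (by linarith : (0:ℝ) ≤ t + ε/2 - t)]; linarith)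
  calc t < t + ε / 2 := by linarith
  _ ≤ sSup S := le_csSup hbdd this

lemma sInf_lt_of_mem_isOpen {S : Set ℝ} (hS : IsOpen S) (hbdd : BddBelow S) {t : ℝ}
    (ht : t ∈ S) : sInf S < t := by
  have h := lt_sSup_of_mem_isOpen (S := -S) hS.neg (by rwa [bddAbove_neg]) (Set.neg_mem_neg.2 ht)
  have : sSup (-S) = -sInf S := by rw [Real.sInf_def, neg_neg]
  rw [this] at h; linarith

lemma sSup_chord_pos (hopen : IsOpen C) (hbdd : Bornology.IsBounded C) (hx : x ∈ C)
    (hv : v ≠ 0) : 0 < Bs C x v :=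
  lt_sSup_of_mem_isOpen (isOpen_chord hopen) (bddAbove_chord hbdd hv) (zero_mem_chord hx)

lemma sInf_chord_neg (hopen : IsOpen C) (hbdd : Bornology.IsBounded C) (hx : x ∈ C)
    (hv : v ≠ 0) : sInf (chord C x v) < 0 :=
  sInf_lt_of_mem_isOpen (isOpen_chord hopen) (bddBelow_chord hbdd hv) (zero_mem_chord hx)

lemma Bs_zero (hx : x ∈ C) : Bs C x 0 = 0 := by
  have : chord C x (0:E) = Set.univ := by ext t; simp [chord, hx]
  rw [Bs, this, Real.sSup_univ]

lemma sInf_chord_not_mem (hopen : IsOpen C) (hbdd : Bornology.IsBounded C) (hx : x ∈ C)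
    (hv : v ≠ 0) : x + (sInf (chord C x v)) • v ∉ C := by
  intro hmem
  exact lt_irrefl _ (sInf_lt_of_mem_isOpen (isOpen_chord hopen) (bddBelow_chord hbdd hv) hmem)

lemma sSup_chord_not_mem (hopen : IsOpen C) (hbdd : Bornology.IsBounded C) (hx : x ∈ C)
    (hv : v ≠ 0) : x + (sSup (chord C x v)) • v ∉ C := by
  intro hmem
  exact lt_irrefl _ (lt_sSup_of_mem_isOpen (isOpen_chord hopen) (bddAbove_chord hbdd hv) hmem)

lemma sInf_chord_mem_closure (hbdd : Bornology.IsBounded C) (hx : x ∈ C) (hv : v ≠ 0) :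
    x + (sInf (chord C x v)) • v ∈ closure C := by
  have h1 : sInf (chord C x v) ∈ closure (chord C x v) :=
    csInf_mem_closure ⟨0, zero_mem_chord hx⟩ (bddBelow_chord hbdd hv)
  have hmap : Set.MapsTo (fun t : ℝ => x + t • v) (chord C x v) C := fun t ht => ht
  have := hmap.closure (f := fun t : ℝ => x + t • v) (by continuity)
  exact this h1

lemma sSup_chord_mem_closure (hbdd : Bornology.IsBounded C) (hx : x ∈ C) (hv : v ≠ 0) :
    x + (sSup (chord C x v)) • v ∈ closure C := by
  have h1 : sSup (chord C x v) ∈ closure (chord C x v) :=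
    csSup_mem_closure ⟨0, zero_mem_chord hx⟩ (bddAbove_chord hbdd hv)
  have hmap : Set.MapsTo (fun t : ℝ => x + t • v) (chord C x v) C := fun t ht => ht
  exact hmap.closure (by continuity) h1


lemma combo_aux (x v e : E) (s lam d : ℝ) (h2 : (1 - lam) * d = lam) :
    lam • ((x + s • v) + e) + (1 - lam) • (x - d • e) = x + (lam * s) • v := by
  calc lam • ((x + s • v) + e) + (1 - lam) • (x - d • e)
      = lam • x + (1 - lam) • x + (lam * s) • v + (lam • e - (1 - lam) • (d • e)) := by
        rw [smul_add, smul_add, smul_sub, smul_smul]; abel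
  _ = x + (lam * s) • v := by
        rw [smul_smul, h2, sub_self, add_zero, ← add_smul]; simp

set_option maxHeartbeats 1000000 in
lemma Bs_continuousAt (hconv : Convex ℝ C) (hopen : IsOpen C) (hbdd : Bornology.IsBounded C)
    (hx : x ∈ C) (hv : v ≠ 0) :
    ContinuousAt (fun pr : E × E => Bs C pr.1 pr.2) (x, v) := by
  rw [ContinuousAt, tendsto_order]
  constructor
  · intro c hc
    obtain ⟨s, hs, hcs⟩ := exists_lt_of_lt_csSup ⟨0, zero_mem_chord hx⟩ hc
    have hcont : ContinuousAt (fun pr : E × E => pr.1 + s • pr.2) (x, v) := by fun_prop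
    have h1 : ∀ᶠ pr : E × E in nhds (x, v), pr.1 + s • pr.2 ∈ C :=
      hcont.eventually_mem (hopen.mem_nhds hs)
    have h2 : ∀ᶠ pr : E × E in nhds (x, v), pr.2 ≠ 0 :=
      continuousAt_snd.eventually_mem (isOpen_compl_singleton.mem_nhds hv)
    filter_upwards [h1, h2] with pr hp1 hp2
    exact lt_of_lt_of_le hcs (le_csSup (bddAbove_chord hbdd hp2) hp1)
  · intro c hc
    set β := Bs C x v with hβ
    have hβpos : 0 < β := sSup_chord_pos hopen hbdd hx hv
    set ε := c - β with hε
    have hεpos : 0 < ε := sub_pos.2 hc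
    obtain ⟨r, hr, hball⟩ := Metric.isOpen_iff.1 hopen x hx
    obtain ⟨R, hR⟩ := hbdd.subset_ball 0
    have hvpos : (0:ℝ) < ‖v‖ := norm_pos_iff.2 hv
    have hRx : 0 < R + ‖x‖ + 1 := by
      have h : ‖x‖ < R := by simpa [Metric.mem_ball, dist_eq_norm] using hR hx
      linarith [norm_nonneg x]
    set T : ℝ := (R + ‖x‖ + 1) * 2 / ‖v‖ with hT
    have hTpos : 0 < T := div_pos (by linarith) hvpos
    set κ : ℝ := ε * r / (8 * β) with hκ
    have hκpos : 0 < κ := div_pos (mul_pos hεpos hr) (by linarith)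
    set δ₁ : ℝ := min 1 (ε * r / (16 * β)) with hδ₁
    set δ₂ : ℝ := min (‖v‖ / 2) (ε * r / (16 * β * (T + 1))) with hδ₂
    have hδ₁pos : 0 < δ₁ := lt_min one_pos (div_pos (mul_pos hεpos hr) (by linarith))
    have hδ₂pos : 0 < δ₂ :=
      lt_min (by linarith) (div_pos (mul_pos hεpos hr) (by nlinarith))
    have e1 : ∀ᶠ y in nhds x, ‖y - x‖ < δ₁ := by
      filter_upwards [Metric.ball_mem_nhds x hδ₁pos] with y hy
      simpa [dist_eq_norm] using hy
    have e2 : ∀ᶠ w in nhds v, ‖w - v‖ < δ₂ := by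
      filter_upwards [Metric.ball_mem_nhds v hδ₂pos] with w hw
      simpa [dist_eq_norm] using hw
    have hprod : ∀ᶠ pr : E × E in nhds (x, v), ‖pr.1 - x‖ < δ₁ ∧ ‖pr.2 - v‖ < δ₂ := by
      rw [nhds_prod_eq]
      exact Filter.eventually_iff_exists_mem.2 ⟨_, Filter.prod_mem_prod e1 e2,
        fun pr hpr => ⟨hpr.1, hpr.2⟩⟩
    filter_upwards [hprod] with pr hpr
    obtain ⟨hy, hw⟩ := hpr
    set y := pr.1; set w := pr.2
    have key : ∀ s ∈ chord C y w, s ≤ β + ε / 2 := by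
      intro s hsmem
      have hmem : y + s • w ∈ C := hsmem
      have hwnorm : ‖v‖ / 2 ≤ ‖w‖ := by
        have hlt : ‖w - v‖ < ‖v‖ / 2 := lt_of_lt_of_le hw (min_le_left _ _)
        have habs := abs_le.1 (abs_norm_sub_norm_le w v)
        linarith [habs.1]
      have hwpos : (0:ℝ) < ‖w‖ := by linarith
      have hsT : |s| ≤ T := by
        have h1 : ‖y + s • w‖ < R := by simpa [Metric.mem_ball, dist_eq_norm] using hR hmem
        have h2 : ‖s • w‖ ≤ ‖y + s • w‖ + ‖y‖ := by
          have := norm_add_le (y + s • w) (-y); simpa using this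
        have hy' : ‖y‖ ≤ ‖x‖ + 1 := by
          have h4 : ‖y‖ ≤ ‖y - x‖ + ‖x‖ := by
            have := norm_add_le (y - x) x; simpa using this
          have h5 : ‖y - x‖ < 1 := lt_of_lt_of_le hy (min_le_left _ _)
          linarith
        have h3 : |s| * ‖w‖ ≤ R + ‖x‖ + 1 := by
          have hsw : ‖s • w‖ = |s| * ‖w‖ := by rw [norm_smul, Real.norm_eq_abs]
          linarith [hsw ▸ h2]
        rw [hT, le_div_iff₀ hvpos]
        nlinarith [abs_nonneg s, h3, hwnorm]
      set e : E := (y - x) + s • (w - v) with he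
      have hyw : y + s • w = (x + s • v) + e := by rw [he, smul_sub]; abel
      have henorm : ‖e‖ ≤ ε * r / (8 * β) := by
        have h1 : ‖e‖ ≤ ‖y - x‖ + ‖s • (w - v)‖ := norm_add_le _ _
        have h2 : ‖s • (w - v)‖ = |s| * ‖w - v‖ := by rw [norm_smul, Real.norm_eq_abs]
        have h3 : ‖y - x‖ ≤ ε * r / (16 * β) := (lt_of_lt_of_le hy (min_le_right _ _)).le
        have h4 : ‖w - v‖ ≤ ε * r / (16 * β * (T + 1)) :=
          (lt_of_lt_of_le hw (min_le_right _ _)).le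
        have h5 : |s| * ‖w - v‖ ≤ T * (ε * r / (16 * β * (T + 1))) :=
          mul_le_mul hsT h4 (norm_nonneg _) hTpos.le
        have hT1 : (0:ℝ) < T + 1 := by linarith
        have h16 : (0:ℝ) < 16 * β := by linarith
        have h6 : T * (ε * r / (16 * β * (T + 1))) ≤ ε * r / (16 * β) := by
          have hTT : T / (T + 1) ≤ 1 := by rw [div_le_one hT1]; linarith
          have heq : T * (ε * r / (16 * β * (T + 1))) = (ε * r / (16 * β)) * (T / (T + 1)) := by
            field_simp
          rw [heq]
          calc (ε * r / (16 * β)) * (T / (T + 1)) ≤ (ε * r / (16 * β)) * 1 :=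
                mul_le_mul_of_nonneg_left hTT (le_of_lt (div_pos (mul_pos hεpos hr) h16))
          _ = ε * r / (16 * β) := mul_one _
        have h7 := h2 ▸ h1
        have h8 : ε * r / (16 * β) + ε * r / (16 * β) = ε * r / (8 * β) := by
          field_simp; ring
        linarith
      have hek : (0:ℝ) < ‖e‖ + κ := by linarith [norm_nonneg e]
      have hrek : (0:ℝ) < r + ‖e‖ + κ := by linarith [norm_nonneg e]
      set lam : ℝ := r / (r + ‖e‖ + κ) with hlam
      have hlampos : 0 < lam := div_pos hr hrek
      have hlamlt : lam < 1 := by rw [hlam, div_lt_one hrek]; linarith [norm_nonneg e]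
      set z : E := x - (r / (‖e‖ + κ)) • e with hz
      have hzmem : z ∈ C := by
        apply hball
        rw [Metric.mem_ball, dist_eq_norm, hz]
        have h9 : x - (r / (‖e‖ + κ)) • e - x = -((r / (‖e‖ + κ)) • e) := by abel
        rw [h9, norm_neg, norm_smul, Real.norm_eq_abs,
          abs_of_nonneg (div_nonneg hr.le hek.le)]
        rw [div_mul_eq_mul_div, div_lt_iff₀ hek]
        nlinarith [norm_nonneg e, hκpos, hr]
      have hcomb : lam • (y + s • w) + (1 - lam) • z = x + (lam * s) • v := by
        rw [hyw, hz]
        apply combo_aux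
        rw [hlam]
        field_simp
        ring
      have hmemcomb : x + (lam * s) • v ∈ C := by
        rw [← hcomb]
        exact hconv hmem hzmem hlampos.le (by linarith) (by ring)
      have hle : lam * s ≤ β := le_csSup (bddAbove_chord hbdd hv) hmemcomb
      have hs2 : s ≤ β * (r + ‖e‖ + κ) / r := by
        rw [le_div_iff₀ hr]
        calc s * r = (lam * s) * (r + ‖e‖ + κ) := by rw [hlam]; field_simp
        _ ≤ β * (r + ‖e‖ + κ) := mul_le_mul_of_nonneg_right hle hrek.le
      have hBe : β * (‖e‖ + κ) ≤ ε * r / 4 := by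
        have h1 : β * ‖e‖ ≤ ε * r / 8 := by
          calc β * ‖e‖ ≤ β * (ε * r / (8 * β)) := mul_le_mul_of_nonneg_left henorm hβpos.le
          _ = ε * r / 8 := by field_simp
        have h2 : β * κ = ε * r / 8 := by rw [hκ]; field_simp
        nlinarith
      have hfrac : β * (‖e‖ + κ) / r ≤ ε / 2 := by
        rw [div_le_iff₀ hr]; nlinarith
      calc s ≤ β * (r + ‖e‖ + κ) / r := hs2
      _ = β + β * (‖e‖ + κ) / r := by field_simp; ring
      _ ≤ β + ε / 2 := by linarith
    have hfin : Bs C y w ≤ β + ε / 2 := Real.sSup_le key (by linarith)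
    calc Bs C y w ≤ β + ε / 2 := hfin
    _ < c := by rw [hε] at hεpos ⊢; linarith

lemma Bs_nonneg (hx : x ∈ C) : 0 ≤ Bs C x v :=
  Real.sSup_nonneg' ⟨0, zero_mem_chord hx, le_rfl⟩

lemma psi_nonneg (hx : x ∈ C) : 0 ≤ psi C x v := inv_nonneg.2 (Bs_nonneg hx)

lemma psi_continuousAt (hconv : Convex ℝ C) (hopen : IsOpen C) (hbdd : Bornology.IsBounded C)
    (hx : x ∈ C) (v : E) :
    ContinuousAt (fun pr : E × E => psi C pr.1 pr.2) (x, v) := by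
  by_cases hv : v = 0
  · subst hv
    obtain ⟨r, hr, hball⟩ := Metric.isOpen_iff.1 hopen x hx
    have hpsi0 : psi C x (0 : E) = 0 := by rw [psi, Bs_zero hx]; simp
    rw [ContinuousAt, hpsi0]
    apply squeeze_zero_norm'
    · show ∀ᶠ pr : E × E in nhds (x, (0:E)), ‖psi C pr.1 pr.2‖ ≤ (4 / r) * ‖pr.2‖
      have hev : ∀ᶠ pr : E × E in nhds (x, (0:E)), pr.1 ∈ Metric.ball x (r/2) := by
        apply continuousAt_fst.eventually_mem
        exact Metric.isOpen_ball.mem_nhds (by simp [hr, half_pos hr])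
      filter_upwards [hev] with pr hp
      set p := pr.1; set w := pr.2
      have hpC : p ∈ C := hball (Metric.ball_subset_ball (by linarith) hp)
      have hnn : 0 ≤ psi C p w := psi_nonneg hpC
      rw [Real.norm_eq_abs, abs_of_nonneg hnn]
      by_cases hw : w = 0
      · rw [hw, psi, Bs_zero hpC]; simp
      · have hwpos : (0:ℝ) < ‖w‖ := norm_pos_iff.2 hw
        set s₀ : ℝ := r / (4 * ‖w‖) with hs₀
        have hs₀pos : 0 < s₀ := div_pos hr (by positivity)
        have hmem : s₀ ∈ chord C p w := by
          show p + s₀ • w ∈ C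
          apply hball
          rw [Metric.mem_ball, dist_eq_norm]
          have h1 : ‖p + s₀ • w - x‖ ≤ ‖p - x‖ + ‖s₀ • w‖ := by
            have heq : p + s₀ • w - x = (p - x) + s₀ • w := by abel
            rw [heq]; exact norm_add_le _ _
          have h2 : ‖s₀ • w‖ = s₀ * ‖w‖ := by
            rw [norm_smul, Real.norm_eq_abs, abs_of_pos hs₀pos]
          have h3 : s₀ * ‖w‖ = r / 4 := by rw [hs₀]; field_simp
          have h4 : ‖p - x‖ < r / 2 := by
            have := Metric.mem_ball.1 hp; rwa [dist_eq_norm] at this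
          linarith [h1, h2.le, h2.ge, h3.le, h3.ge, h4]
        have hBs : s₀ ≤ Bs C p w := le_csSup (bddAbove_chord hbdd hw) hmem
        have : psi C p w ≤ s₀⁻¹ := by
          rw [psi]
          exact inv_anti₀ hs₀pos hBs
        have hs₀inv : s₀⁻¹ = 4 / r * ‖w‖ := by rw [hs₀]; field_simp
        linarith [this, hs₀inv.le, hs₀inv.ge]
    · have : Tendsto (fun pr : E × E => 4 / r * ‖pr.2‖) (nhds (x, (0:E)))
          (nhds (4 / r * ‖(0:E)‖)) :=
        (Continuous.tendsto (by continuity) (x, (0:E)))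
      simpa using this
  · have h1 := Bs_continuousAt hconv hopen hbdd hx hv
    exact h1.inv₀ (ne_of_gt (sSup_chord_pos hopen hbdd hx hv))

lemma neg_sInf_chord' (C : Set E) (x v : E) : -sInf (chord C x v) = Bs C x (-v) := by
  have : chord C x (-v) = -(chord C x v) := by
    ext t; simp [chord, Set.mem_neg, smul_neg, neg_smul]
  rw [Bs, this, Real.sInf_def, neg_neg]

lemma finsler_eq_psi (hx : x ∈ C) (v : E) :
    finslerNorm C x v = (1/2) * (psi C x (-v) + psi C x v) := by
  by_cases hv : v = 0
  · subst hv; simp [finslerNorm, psi, Bs_zero hx]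
  · rw [finslerNorm, if_neg hv, psi, psi, ← neg_sInf_chord']
    simp [chord, Bs, one_div]

lemma finsler_nonneg (hopen : IsOpen C) (hbdd : Bornology.IsBounded C) (hx : x ∈ C) (v : E) :
    0 ≤ finslerNorm C x v := by
  rw [finsler_eq_psi hx]
  have := psi_nonneg (C := C) (v := -v) hx
  have := psi_nonneg (C := C) (v := v) hx
  linarith

/-- Key pointwise bound: the Finsler norm dominates logarithmic derivatives of affine
functionals positive on `C`. -/
lemma finsler_key_bound (hopen : IsOpen C) (hbdd : Bornology.IsBounded C)
    (f₁ f₂ : E →L[ℝ] ℝ) (c₁ c₂ : ℝ)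
    (h₁ : ∀ y ∈ C, 0 < f₁ y + c₁) (h₂ : ∀ y ∈ C, 0 < f₂ y + c₂)
    (hx : x ∈ C) (v : E) :
    (1/2) * (f₁ v / (f₁ x + c₁) - f₂ v / (f₂ x + c₂)) ≤ finslerNorm C x v := by
  by_cases hv : v = 0
  · subst hv; simp [finslerNorm]
  · set α := sInf (chord C x v) with hα
    set β := sSup (chord C x v) with hβ
    have hαneg : α < 0 := sInf_chord_neg hopen hbdd hx hv
    have hβpos : 0 < β := sSup_chord_pos hopen hbdd hx hv
    have hD₁ : 0 < f₁ x + c₁ := h₁ x hx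
    have hD₂ : 0 < f₂ x + c₂ := h₂ x hx
    have hcl₁ : ∀ y ∈ closure C, 0 ≤ f₁ y + c₁ := by
      intro y hy
      have hsub : C ⊆ {y | 0 ≤ f₁ y + c₁} := fun z hz => (h₁ z hz).le
      have hcls : IsClosed {y : E | 0 ≤ f₁ y + c₁} :=
        isClosed_le continuous_const (f₁.continuous.add continuous_const)
      exact closure_minimal hsub hcls hy
    have hcl₂ : ∀ y ∈ closure C, 0 ≤ f₂ y + c₂ := by
      intro y hy
      have hsub : C ⊆ {y | 0 ≤ f₂ y + c₂} := fun z hz => (h₂ z hz).le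
      have hcls : IsClosed {y : E | 0 ≤ f₂ y + c₂} :=
        isClosed_le continuous_const (f₂.continuous.add continuous_const)
      exact closure_minimal hsub hcls hy
    have ha := hcl₁ _ (sInf_chord_mem_closure hbdd hx hv)
    have hb := hcl₂ _ (sSup_chord_mem_closure hbdd hx hv)
    rw [map_add, _root_.map_smul, smul_eq_mul] at ha hb
    rw [← hα] at ha; rw [← hβ] at hb
    -- ha : 0 ≤ f₁ x + α * f₁ v + c₁ ; hb : 0 ≤ f₂ x + β * f₂ v + c₂
    have t₁ : f₁ v / (f₁ x + c₁) ≤ 1 / (-α) := by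
      rw [div_le_div_iff₀ hD₁ (by linarith)]
      nlinarith
    have t₂ : -(f₂ v) / (f₂ x + c₂) ≤ 1 / β := by
      rw [div_le_div_iff₀ hD₂ hβpos]
      nlinarith
    rw [finslerNorm, if_neg hv]
    have hrw : f₁ v / (f₁ x + c₁) - f₂ v / (f₂ x + c₂)
        = f₁ v / (f₁ x + c₁) + (-(f₂ v)) / (f₂ x + c₂) := by ring
    rw [hrw]
    have := add_le_add t₁ t₂
    show (1:ℝ)/2 * _ ≤ (1:ℝ)/2 * (1 / (-sInf (chord C x v)) + 1 / sSup (chord C x v))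
    rw [← hα, ← hβ]
    linarith

lemma chord_translate (C : Set E) (x v : E) (t : ℝ) :
    chord C (x + t • v) v = {s : ℝ | s + t ∈ chord C x v} := by
  ext s
  simp only [chord, Set.mem_setOf_eq]
  rw [add_assoc, ← add_smul, add_comm s t]

lemma sSup_chord_translate (hbdd : Bornology.IsBounded C) (hx : x ∈ C) (hv : v ≠ 0) (t : ℝ) :
    sSup (chord C (x + t • v) v) = sSup (chord C x v) - t := by
  rw [chord_translate]
  have himg : {s : ℝ | s + t ∈ chord C x v} = (fun u => u - t) '' (chord C x v) := by
    ext s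
    constructor
    · intro hs; exact ⟨s + t, hs, by ring⟩
    · rintro ⟨u, hu, rfl⟩; simpa using hu
  rw [himg]
  have hmono : Monotone (fun u : ℝ => u - t) := fun a b hab => by simpa using hab
  rw [← Monotone.map_csSup_of_continuousAt (by fun_prop) hmono ⟨0, zero_mem_chord hx⟩
    (bddAbove_chord hbdd hv)]

lemma sInf_chord_translate (hbdd : Bornology.IsBounded C) (hx : x ∈ C) (hv : v ≠ 0) (t : ℝ) :
    sInf (chord C (x + t • v) v) = sInf (chord C x v) - t := by
  rw [chord_translate]
  have himg : {s : ℝ | s + t ∈ chord C x v} = (fun u => u - t) '' (chord C x v) := by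
    ext s
    constructor
    · intro hs; exact ⟨s + t, hs, by ring⟩
    · rintro ⟨u, hu, rfl⟩; simpa using hu
  rw [himg]
  have hmono : Monotone (fun u : ℝ => u - t) := fun a b hab => by simpa using hab
  rw [← Monotone.map_csInf_of_continuousAt (by fun_prop) hmono ⟨0, zero_mem_chord hx⟩
    (bddBelow_chord hbdd hv)]


lemma piece_step (hconv : Convex ℝ C) (hopen : IsOpen C) (hbdd : Bornology.IsBounded C)
    (f₁ f₂ : E →L[ℝ] ℝ) (c₁ c₂ : ℝ)
    (h₁ : ∀ y ∈ C, 0 < f₁ y + c₁) (h₂ : ∀ y ∈ C, 0 < f₂ y + c₂)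
    {σ : ℝ → E} {A B : ℝ} (hAB : A < B)
    (hmem : ∀ t ∈ Set.Icc A B, σ t ∈ C)
    (hcd : ContDiffOn ℝ 1 σ (Set.Icc A B)) :
    IntervalIntegrable (fun t => finslerNorm C (σ t) (deriv σ t)) volume A B ∧
    ((1:ℝ)/2) * (Real.log (f₁ (σ B) + c₁) - Real.log (f₂ (σ B) + c₂)) -
      ((1:ℝ)/2) * (Real.log (f₁ (σ A) + c₁) - Real.log (f₂ (σ A) + c₂)) ≤
      ∫ t in A..B, finslerNorm C (σ t) (deriv σ t) := by
  set w : ℝ → E := fun t => derivWithin σ (Set.Icc A B) t with hw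
  have hσcont : ContinuousOn σ (Set.Icc A B) := hcd.continuousOn
  have hw_cont : ContinuousOn w (Set.Icc A B) :=
    hcd.continuousOn_derivWithin (uniqueDiffOn_Icc hAB) le_rfl
  have hderiv : ∀ t ∈ Set.Ioo A B, HasDerivAt σ (w t) t := by
    intro t ht
    have hnh : Set.Icc A B ∈ nhds t := Icc_mem_nhds ht.1 ht.2
    have hdiff : DifferentiableAt ℝ σ t :=
      ((hcd.differentiableOn one_ne_zero) t (Set.Ioo_subset_Icc_self ht)).differentiableAt hnh
    have heq : w t = deriv σ t := derivWithin_of_mem_nhds hnh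
    rw [heq]; exact hdiff.hasDerivAt
  set k : ℝ → ℝ := fun t => finslerNorm C (σ t) (w t) with hk
  have hk_cont : ContinuousOn k (Set.Icc A B) := by
    intro t ht
    have hmt := hmem t ht
    have hp1 : ContinuousWithinAt (fun u => ((σ u, w u) : E × E)) (Set.Icc A B) t :=
      (hσcont t ht).prodMk (hw_cont t ht)
    have hp2 : ContinuousWithinAt (fun u => ((σ u, -(w u)) : E × E)) (Set.Icc A B) t :=
      (hσcont t ht).prodMk (hw_cont t ht).neg
    have c1 := ContinuousAt.comp_continuousWithinAt
      (g := fun pr : E × E => psi C pr.1 pr.2) (f := fun u => ((σ u, w u) : E × E)) (x := t)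
      (psi_continuousAt hconv hopen hbdd hmt (w t)) hp1
    have c2 := ContinuousAt.comp_continuousWithinAt
      (g := fun pr : E × E => psi C pr.1 pr.2) (f := fun u => ((σ u, -(w u)) : E × E)) (x := t)
      (psi_continuousAt hconv hopen hbdd hmt (-(w t))) hp2
    have hcw : ContinuousWithinAt
        (fun u => ((1:ℝ)/2) * (psi C (σ u) (-(w u)) + psi C (σ u) (w u))) (Set.Icc A B) t :=
      continuousWithinAt_const.mul (c2.add c1)
    exact hcw.congr (fun u hu => finsler_eq_psi (hmem u hu) (w u))
      (finsler_eq_psi hmt (w t))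
  have hk_int : IntervalIntegrable k volume A B := by
    apply ContinuousOn.intervalIntegrable
    rwa [Set.uIcc_of_le hAB.le]
  have hBae : ∀ᵐ (t : ℝ) ∂(volume : Measure ℝ), t ≠ B := by
    rw [ae_iff]
    have : {t : ℝ | ¬t ≠ B} = {B} := by ext t; simp
    rw [this]
    exact Real.volume_singleton
  have haeeq : ∀ᵐ t ∂(volume : Measure ℝ), t ∈ Set.uIoc A B →
      finslerNorm C (σ t) (deriv σ t) = k t := by
    filter_upwards [hBae] with t htB htmem
    rw [Set.uIoc_of_le hAB.le] at htmem
    have htoo : t ∈ Set.Ioo A B := ⟨htmem.1, lt_of_le_of_ne htmem.2 htB⟩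
    rw [(hderiv t htoo).deriv]
  have hieq : ∫ t in A..B, finslerNorm C (σ t) (deriv σ t) = ∫ t in A..B, k t :=
    intervalIntegral.integral_congr_ae haeeq
  have hint : IntervalIntegrable (fun t => finslerNorm C (σ t) (deriv σ t)) volume A B := by
    rw [intervalIntegrable_iff] at hk_int ⊢
    have hae2 : (fun t => finslerNorm C (σ t) (deriv σ t)) =ᵐ[volume.restrict (Set.uIoc A B)] k := by
      filter_upwards [(ae_restrict_iff' measurableSet_uIoc).2 haeeq] with t h1
      exact h1
    exact hk_int.congr hae2.symm
  constructor
  · exact hint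
  · -- FTC
    set g : ℝ → ℝ := fun t =>
      ((1:ℝ)/2) * (Real.log (f₁ (σ t) + c₁) - Real.log (f₂ (σ t) + c₂)) with hg
    have hgcont : ContinuousOn g (Set.Icc A B) := by
      have h1 : ContinuousOn (fun t => f₁ (σ t) + c₁) (Set.Icc A B) :=
        (f₁.continuous.comp_continuousOn hσcont).add continuousOn_const
      have h2 : ContinuousOn (fun t => f₂ (σ t) + c₂) (Set.Icc A B) :=
        (f₂.continuous.comp_continuousOn hσcont).add continuousOn_const
      have hl1 : ContinuousOn (fun t => Real.log (f₁ (σ t) + c₁)) (Set.Icc A B) :=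
        h1.log (fun t ht => ne_of_gt (h₁ _ (hmem t ht)))
      have hl2 : ContinuousOn (fun t => Real.log (f₂ (σ t) + c₂)) (Set.Icc A B) :=
        h2.log (fun t ht => ne_of_gt (h₂ _ (hmem t ht)))
      exact continuousOn_const.mul (hl1.sub hl2)
    set gd : ℝ → ℝ := fun t =>
      ((1:ℝ)/2) * (f₁ (w t) / (f₁ (σ t) + c₁) - f₂ (w t) / (f₂ (σ t) + c₂)) with hgd
    have hgd_cont : ContinuousOn gd (Set.Icc A B) := by
      have h1 : ContinuousOn (fun t => f₁ (w t) / (f₁ (σ t) + c₁)) (Set.Icc A B) :=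
        (f₁.continuous.comp_continuousOn hw_cont).div
          ((f₁.continuous.comp_continuousOn hσcont).add continuousOn_const)
          (fun t ht => ne_of_gt (h₁ _ (hmem t ht)))
      have h2 : ContinuousOn (fun t => f₂ (w t) / (f₂ (σ t) + c₂)) (Set.Icc A B) :=
        (f₂.continuous.comp_continuousOn hw_cont).div
          ((f₂.continuous.comp_continuousOn hσcont).add continuousOn_const)
          (fun t ht => ne_of_gt (h₂ _ (hmem t ht)))
      exact continuousOn_const.mul (h1.sub h2)
    have hgd_int : IntervalIntegrable gd volume A B := by
      apply ContinuousOn.intervalIntegrable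
      rwa [Set.uIcc_of_le hAB.le]
    have hgd_deriv : ∀ t ∈ Set.Ioo A B, HasDerivAt g (gd t) t := by
      intro t ht
      have hσ' := hderiv t ht
      have htmem := hmem t (Set.Ioo_subset_Icc_self ht)
      have hu1 : HasDerivAt (fun u => f₁ (σ u) + c₁) (f₁ (w t)) t :=
        (f₁.hasFDerivAt.comp_hasDerivAt t hσ').add_const c₁
      have hu2 : HasDerivAt (fun u => f₂ (σ u) + c₂) (f₂ (w t)) t :=
        (f₂.hasFDerivAt.comp_hasDerivAt t hσ').add_const c₂
      have hl1 : HasDerivAt (fun u => Real.log (f₁ (σ u) + c₁))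
          (f₁ (w t) / (f₁ (σ t) + c₁)) t := hu1.log (ne_of_gt (h₁ _ htmem))
      have hl2 : HasDerivAt (fun u => Real.log (f₂ (σ u) + c₂))
          (f₂ (w t) / (f₂ (σ t) + c₂)) t := hu2.log (ne_of_gt (h₂ _ htmem))
      have := (hl1.sub hl2).const_mul ((1:ℝ)/2)
      exact this
    have hftc : ∫ t in A..B, gd t = g B - g A :=
      intervalIntegral.integral_eq_sub_of_hasDeriv_right_of_le hAB.le hgcont
        (fun t ht => (hgd_deriv t ht).hasDerivWithinAt) hgd_int
    have hmono : ∫ t in A..B, gd t ≤ ∫ t in A..B, k t :=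
      intervalIntegral.integral_mono_on hAB.le hgd_int hk_int
        (fun t ht => finsler_key_bound hopen hbdd f₁ f₂ c₁ c₂ h₁ h₂ (hmem t ht) (w t))
    rw [hieq]
    calc ((1:ℝ)/2) * (Real.log (f₁ (σ B) + c₁) - Real.log (f₂ (σ B) + c₂)) -
        ((1:ℝ)/2) * (Real.log (f₁ (σ A) + c₁) - Real.log (f₂ (σ A) + c₂))
        = g B - g A := rfl
    _ = ∫ t in A..B, gd t := hftc.symm
    _ ≤ ∫ t in A..B, k t := hmono

lemma path_lower_bound (hconv : Convex ℝ C) (hopen : IsOpen C) (hbdd : Bornology.IsBounded C)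
    (f₁ f₂ : E →L[ℝ] ℝ) (c₁ c₂ : ℝ)
    (h₁ : ∀ y ∈ C, 0 < f₁ y + c₁) (h₂ : ∀ y ∈ C, 0 < f₂ y + c₂)
    {σ : ℝ → E}
    (hmem : ∀ t ∈ Set.Icc (0:ℝ) 1, σ t ∈ C)
    {m : ℕ} {τ : Fin (m + 2) → ℝ} (hτ : StrictMono τ) (hτ0 : τ 0 = 0)
    (hτ1 : τ (Fin.last (m + 1)) = 1)
    (hpc : ∀ i : Fin (m + 1), ContDiffOn ℝ 1 σ (Set.Icc (τ i.castSucc) (τ i.succ))) :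
    ((1:ℝ)/2) * (Real.log (f₁ (σ 1) + c₁) - Real.log (f₂ (σ 1) + c₂)) -
      ((1:ℝ)/2) * (Real.log (f₁ (σ 0) + c₁) - Real.log (f₂ (σ 0) + c₂)) ≤
      ∫ t in (0:ℝ)..1, finslerNorm C (σ t) (deriv σ t) := by
  set F : ℝ → ℝ := fun t => finslerNorm C (σ t) (deriv σ t) with hF
  set g : ℝ → ℝ := fun t =>
    ((1:ℝ)/2) * (Real.log (f₁ (σ t) + c₁) - Real.log (f₂ (σ t) + c₂)) with hg
  have ha' : ∀ i : ℕ, min i (m+1) < m + 2 := fun i => by omega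
  set a : ℕ → ℝ := fun i => τ ⟨min i (m+1), ha' i⟩ with ha
  have ha0 : a 0 = 0 := by
    show τ ⟨min 0 (m+1), ha' 0⟩ = 0
    have h : (⟨min 0 (m+1), ha' 0⟩ : Fin (m+2)) = 0 := by
      rw [Fin.ext_iff]; simp
    rw [h, hτ0]
  have ham : a (m+1) = 1 := by
    show τ ⟨min (m+1) (m+1), ha' (m+1)⟩ = 1
    have h : (⟨min (m+1) (m+1), ha' (m+1)⟩ : Fin (m+2)) = Fin.last (m+1) := by
      rw [Fin.ext_iff]; simp [Fin.last]
    rw [h, hτ1]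
  have hak : ∀ k (hk : k < m + 1), a k = τ ((⟨k, hk⟩ : Fin (m+1)).castSucc) := by
    intro k hk
    show τ ⟨min k (m+1), ha' k⟩ = _
    congr 1
    rw [Fin.ext_iff]
    simp [Fin.ext_iff]
    omega
  have hak1 : ∀ k (hk : k < m + 1), a (k+1) = τ ((⟨k, hk⟩ : Fin (m+1)).succ) := by
    intro k hk
    show τ ⟨min (k+1) (m+1), ha' (k+1)⟩ = _
    congr 1
    rw [Fin.ext_iff]
    simp [Fin.ext_iff, Fin.succ]
    omega
  have hτmem : ∀ i : Fin (m+2), τ i ∈ Set.Icc (0:ℝ) 1 := by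
    intro i
    constructor
    · rw [← hτ0]; exact hτ.monotone (Fin.zero_le i)
    · rw [← hτ1]; exact hτ.monotone (Fin.le_last i)
  have hstep : ∀ k (hk : k < m + 1),
      IntervalIntegrable F volume (a k) (a (k+1)) ∧
      g (a (k+1)) - g (a k) ≤ ∫ t in a k..a (k+1), F t := by
    intro k hk
    set i : Fin (m+1) := ⟨k, hk⟩ with hi
    have hlt : τ i.castSucc < τ i.succ := hτ ((Fin.castSucc_lt_succ (i := i)))
    have hsub : Set.Icc (τ i.castSucc) (τ i.succ) ⊆ Set.Icc (0:ℝ) 1 :=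
      Set.Icc_subset_Icc (hτmem i.castSucc).1 (hτmem i.succ).2
    have hps := piece_step hconv hopen hbdd f₁ f₂ c₁ c₂ h₁ h₂ hlt
      (fun t ht => hmem t (hsub ht)) (hpc i)
    rw [hak k hk, hak1 k hk]
    exact hps
  have hint : ∀ k < m + 1, IntervalIntegrable F volume (a k) (a (k+1)) :=
    fun k hk => (hstep k hk).1
  have hsum : ∑ k ∈ Finset.range (m+1), ∫ t in a k..a (k+1), F t
      = ∫ t in (a 0)..(a (m+1)), F t :=
    intervalIntegral.sum_integral_adjacent_intervals hint
  have htel : ∑ k ∈ Finset.range (m+1), (g (a (k+1)) - g (a k))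
      = g (a (m+1)) - g (a 0) :=
    Finset.sum_range_sub (fun i => g (a i)) (m+1)
  have hle : ∀ k ∈ Finset.range (m+1),
      g (a (k+1)) - g (a k) ≤ ∫ t in a k..a (k+1), F t :=
    fun k hk => (hstep k (Finset.mem_range.1 hk)).2
  calc ((1:ℝ)/2) * (Real.log (f₁ (σ 1) + c₁) - Real.log (f₂ (σ 1) + c₂)) -
      ((1:ℝ)/2) * (Real.log (f₁ (σ 0) + c₁) - Real.log (f₂ (σ 0) + c₂))
      = g (a (m+1)) - g (a 0) := by rw [ha0, ham]
  _ = ∑ k ∈ Finset.range (m+1), (g (a (k+1)) - g (a k)) := htel.symm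
  _ ≤ ∑ k ∈ Finset.range (m+1), ∫ t in a k..a (k+1), F t := Finset.sum_le_sum hle
  _ = ∫ t in (a 0)..(a (m+1)), F t := hsum
  _ = ∫ t in (0:ℝ)..1, F t := by rw [ha0, ham]

section Main
variable {p q : E}

lemma one_mem_chord (hq : q ∈ C) : (1:ℝ) ∈ chord C p (q - p) := by
  show p + (1:ℝ) • (q - p) ∈ C
  rw [one_smul]
  simpa using hq

lemma one_lt_sSup_chord (hopen : IsOpen C) (hbdd : Bornology.IsBounded C)
    (hq : q ∈ C) (hpq : p ≠ q) : 1 < sSup (chord C p (q - p)) :=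
  lt_sSup_of_mem_isOpen (isOpen_chord hopen)
    (bddAbove_chord hbdd (sub_ne_zero.2 (Ne.symm hpq))) (one_mem_chord hq)

/-- dual form of the Hilbert distance -/
lemma hilbertDist_dual (hopen : IsOpen C) (hbdd : Bornology.IsBounded C)
    (hp : p ∈ C) (hq : q ∈ C) (hpq : p ≠ q) :
    hilbertDist C p q = ((1:ℝ)/2) *
      ((Real.log (1 - sInf (chord C p (q - p))) - Real.log (-sInf (chord C p (q - p)))) +
       (Real.log (sSup (chord C p (q - p))) - Real.log (sSup (chord C p (q - p)) - 1))) := by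
  have hv : q - p ≠ 0 := sub_ne_zero.2 (Ne.symm hpq)
  set α := sInf (chord C p (q - p)) with hα
  set β := sSup (chord C p (q - p)) with hβ
  have hαneg : α < 0 := sInf_chord_neg hopen hbdd hp hv
  have hβ1 : 1 < β := one_lt_sSup_chord hopen hbdd hq hpq
  have h1 : (0:ℝ) < 1 - α := by linarith
  have h2 : (0:ℝ) < -α := by linarith
  have h3 : (0:ℝ) < β := by linarith
  have h4 : (0:ℝ) < β - 1 := by linarith
  rw [hilbertDist, if_neg hpq]
  have e1 : sInf {t : ℝ | p + t • (q - p) ∈ C} = α := rfl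
  have e2 : sSup {t : ℝ | p + t • (q - p) ∈ C} = β := rfl
  rw [e1, e2]
  rw [Real.log_mul (by positivity) (by positivity),
    Real.log_div (by positivity) (by positivity),
    Real.log_div (by positivity) (by positivity)]

lemma straight_line_length (hconv : Convex ℝ C) (hopen : IsOpen C)
    (hbdd : Bornology.IsBounded C) (hp : p ∈ C) (hq : q ∈ C) (hpq : p ≠ q) :
    ∫ t in (0:ℝ)..1, finslerNorm C (p + t • (q - p))
        (deriv (fun u : ℝ => p + u • (q - p)) t) = hilbertDist C p q := by
  have hv : q - p ≠ 0 := sub_ne_zero.2 (Ne.symm hpq)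
  set v := q - p with hvdef
  set α := sInf (chord C p v) with hα
  set β := sSup (chord C p v) with hβ
  have hαneg : α < 0 := sInf_chord_neg hopen hbdd hp hv
  have hβ1 : 1 < β := one_lt_sSup_chord hopen hbdd hq hpq
  have hderiv : ∀ t : ℝ, HasDerivAt (fun u : ℝ => p + u • v) v t := by
    intro t
    have h1 : HasDerivAt (fun u : ℝ => u • v) ((1:ℝ) • v) t :=
      (hasDerivAt_id t).smul_const v
    rw [one_smul] at h1
    exact h1.const_add p
  have hσmem : ∀ t ∈ Set.Icc (0:ℝ) 1, p + t • v ∈ C := by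
    intro t ht
    have hcomb := hconv hp hq (by linarith [ht.2] : (0:ℝ) ≤ 1 - t) ht.1 (by ring)
    have heq : (1 - t) • p + t • q = p + t • v := by
      rw [hvdef, smul_sub, sub_smul, one_smul]; abel
    rwa [heq] at hcomb
  have hcong : ∀ t ∈ Set.uIcc (0:ℝ) 1,
      finslerNorm C (p + t • v) (deriv (fun u : ℝ => p + u • v) t)
        = ((1:ℝ)/2) * ((t - α)⁻¹ + (β - t)⁻¹) := by
    intro t ht
    rw [(hderiv t).deriv]
    rw [finslerNorm, if_neg hv]
    have e1 : sInf {s : ℝ | (p + t • v) + s • v ∈ C} = α - t :=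
      sInf_chord_translate hbdd hp hv t
    have e2 : sSup {s : ℝ | (p + t • v) + s • v ∈ C} = β - t :=
      sSup_chord_translate hbdd hp hv t
    rw [e1, e2]
    rw [neg_sub]
    rw [one_div, one_div]
    ring_nf
  rw [intervalIntegral.integral_congr (fun t ht => hcong t ht)]
  have hpos1 : ∀ t ∈ Set.uIcc (0:ℝ) 1, (0:ℝ) < t - α := by
    intro t ht
    rw [Set.uIcc_of_le (by norm_num : (0:ℝ) ≤ 1)] at ht
    linarith [ht.1]
  have hpos2 : ∀ t ∈ Set.uIcc (0:ℝ) 1, (0:ℝ) < β - t := by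
    intro t ht
    rw [Set.uIcc_of_le (by norm_num : (0:ℝ) ≤ 1)] at ht
    linarith [ht.2]
  have hG : ∀ t ∈ Set.uIcc (0:ℝ) 1,
      HasDerivAt (fun u : ℝ => ((1:ℝ)/2) * (Real.log (u - α) - Real.log (β - u)))
        (((1:ℝ)/2) * ((t - α)⁻¹ + (β - t)⁻¹)) t := by
    intro t ht
    have h1 : HasDerivAt (fun u : ℝ => u - α) 1 t := (hasDerivAt_id t).sub_const α
    have hl1 : HasDerivAt (fun u : ℝ => Real.log (u - α)) (1 / (t - α)) t :=
      h1.log (ne_of_gt (hpos1 t ht))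
    have h2 : HasDerivAt (fun u : ℝ => β - u) (-1) t := by
      simpa using (hasDerivAt_id t).const_sub β
    have hl2 : HasDerivAt (fun u : ℝ => Real.log (β - u)) ((-1) / (β - t)) t :=
      h2.log (ne_of_gt (hpos2 t ht))
    have := (hl1.sub hl2).const_mul ((1:ℝ)/2)
    refine this.congr_deriv ?_
    field_simp
    ring
  have hint : IntervalIntegrable (fun t : ℝ => ((1:ℝ)/2) * ((t - α)⁻¹ + (β - t)⁻¹))
      volume 0 1 := by
    apply ContinuousOn.intervalIntegrable
    apply ContinuousOn.mul continuousOn_const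
    apply ContinuousOn.add
    · exact ((continuousOn_id.sub continuousOn_const).inv₀
        (fun t ht => ne_of_gt (hpos1 t ht)))
    · exact ((continuousOn_const.sub continuousOn_id).inv₀
        (fun t ht => ne_of_gt (hpos2 t ht)))
  rw [intervalIntegral.integral_eq_sub_of_hasDerivAt hG hint]
  rw [hilbertDist_dual hopen hbdd hp hq hpq]
  simp only [zero_sub, sub_zero]
  ring

theorem hilbertDist_eq_length_distance' {n : ℕ} (C : Set (EuclideanSpace ℝ (Fin n)))
    (hconv : Convex ℝ C) (hopen : IsOpen C) (hbdd : Bornology.IsBounded C)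
    (p q : EuclideanSpace ℝ (Fin n)) (hp : p ∈ C) (hq : q ∈ C) :
    hilbertDist C p q = sInf {L : ℝ |
      ∃ σ : ℝ → EuclideanSpace ℝ (Fin n),
        σ 0 = p ∧ σ 1 = q ∧
        (∀ t ∈ Set.Icc (0 : ℝ) 1, σ t ∈ C) ∧
        ContinuousOn σ (Set.Icc (0 : ℝ) 1) ∧
        (∃ (m : ℕ) (τ : Fin (m + 2) → ℝ), StrictMono τ ∧ τ 0 = 0 ∧ τ (Fin.last (m + 1)) = 1 ∧
          ∀ i : Fin (m + 1), ContDiffOn ℝ 1 σ (Set.Icc (τ i.castSucc) (τ i.succ))) ∧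
        L = ∫ t in (0 : ℝ)..1, finslerNorm C (σ t) (deriv σ t)} := by
  set τ₀ : Fin 2 → ℝ := fun i => (i.val : ℝ) with hτ₀def
  have hτ₀sm : StrictMono τ₀ := fun a b hab => by
    show (a.val : ℝ) < (b.val : ℝ)
    exact_mod_cast hab
  have hτ₀0 : τ₀ 0 = 0 := by simp [hτ₀def]
  have hτ₀1 : τ₀ (Fin.last 1) = 1 := by simp [hτ₀def, Fin.last]
  by_cases hpq : p = q
  · subst hpq
    have hd : hilbertDist C p p = 0 := if_pos rfl
    have hmem0 : (0:ℝ) ∈ {L : ℝ |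
      ∃ σ : ℝ → EuclideanSpace ℝ (Fin n),
        σ 0 = p ∧ σ 1 = p ∧
        (∀ t ∈ Set.Icc (0 : ℝ) 1, σ t ∈ C) ∧
        ContinuousOn σ (Set.Icc (0 : ℝ) 1) ∧
        (∃ (m : ℕ) (τ : Fin (m + 2) → ℝ), StrictMono τ ∧ τ 0 = 0 ∧ τ (Fin.last (m + 1)) = 1 ∧
          ∀ i : Fin (m + 1), ContDiffOn ℝ 1 σ (Set.Icc (τ i.castSucc) (τ i.succ))) ∧
        L = ∫ t in (0 : ℝ)..1, finslerNorm C (σ t) (deriv σ t)} := by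
      refine ⟨fun _ => p, rfl, rfl, fun t _ => hp, continuousOn_const,
        ⟨0, τ₀, hτ₀sm, hτ₀0, hτ₀1, fun i => contDiffOn_const⟩, ?_⟩
      have hd0 : ∀ t : ℝ, deriv (fun _ : ℝ => p) t = 0 := fun t => deriv_const t p
      have : ∀ t : ℝ, finslerNorm C ((fun _ : ℝ => p) t) (deriv (fun _ : ℝ => p) t) = 0 := by
        intro t; rw [hd0 t]; exact if_pos rfl
      rw [intervalIntegral.integral_congr (fun t _ => this t)]
      simp
    have hlb : ∀ L ∈ {L : ℝ |
      ∃ σ : ℝ → EuclideanSpace ℝ (Fin n),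
        σ 0 = p ∧ σ 1 = p ∧
        (∀ t ∈ Set.Icc (0 : ℝ) 1, σ t ∈ C) ∧
        ContinuousOn σ (Set.Icc (0 : ℝ) 1) ∧
        (∃ (m : ℕ) (τ : Fin (m + 2) → ℝ), StrictMono τ ∧ τ 0 = 0 ∧ τ (Fin.last (m + 1)) = 1 ∧
          ∀ i : Fin (m + 1), ContDiffOn ℝ 1 σ (Set.Icc (τ i.castSucc) (τ i.succ))) ∧
        L = ∫ t in (0 : ℝ)..1, finslerNorm C (σ t) (deriv σ t)}, (0:ℝ) ≤ L := by
      rintro L ⟨σ, h0, h1, hmemσ, hcontσ, hpcσ, rfl⟩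
      apply intervalIntegral.integral_nonneg (by norm_num : (0:ℝ) ≤ 1)
      intro u hu
      exact finsler_nonneg hopen hbdd (hmemσ u hu) _
    rw [hd]
    exact le_antisymm (le_csInf ⟨0, hmem0⟩ hlb) (csInf_le ⟨0, hlb⟩ hmem0)
  · have hv : q - p ≠ 0 := sub_ne_zero.2 (Ne.symm hpq)
    have hd := hilbertDist_dual hopen hbdd hp hq hpq
    have hlen := straight_line_length hconv hopen hbdd hp hq hpq
    have hσ₀mem : ∀ t ∈ Set.Icc (0:ℝ) 1, p + t • (q - p) ∈ C := by
      intro t ht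
      have hcomb := hconv hp hq (by linarith [ht.2] : (0:ℝ) ≤ 1 - t) ht.1 (by ring)
      have heq : (1 - t) • p + t • q = p + t • (q - p) := by
        rw [smul_sub, sub_smul, one_smul]; abel
      rwa [heq] at hcomb
    have hmemS : hilbertDist C p q ∈ {L : ℝ |
      ∃ σ : ℝ → EuclideanSpace ℝ (Fin n),
        σ 0 = p ∧ σ 1 = q ∧
        (∀ t ∈ Set.Icc (0 : ℝ) 1, σ t ∈ C) ∧
        ContinuousOn σ (Set.Icc (0 : ℝ) 1) ∧
        (∃ (m : ℕ) (τ : Fin (m + 2) → ℝ), StrictMono τ ∧ τ 0 = 0 ∧ τ (Fin.last (m + 1)) = 1 ∧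
          ∀ i : Fin (m + 1), ContDiffOn ℝ 1 σ (Set.Icc (τ i.castSucc) (τ i.succ))) ∧
        L = ∫ t in (0 : ℝ)..1, finslerNorm C (σ t) (deriv σ t)} := by
      refine ⟨fun u : ℝ => p + u • (q - p), by simp, by simp, hσ₀mem, ?_,
        ⟨0, τ₀, hτ₀sm, hτ₀0, hτ₀1, fun i => ?_⟩, hlen.symm⟩
      · exact Continuous.continuousOn (by continuity)
      · exact (contDiff_const.add (contDiff_id.smul contDiff_const)).contDiffOn
    have hlb : ∀ L ∈ {L : ℝ |
      ∃ σ : ℝ → EuclideanSpace ℝ (Fin n),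
        σ 0 = p ∧ σ 1 = q ∧
        (∀ t ∈ Set.Icc (0 : ℝ) 1, σ t ∈ C) ∧
        ContinuousOn σ (Set.Icc (0 : ℝ) 1) ∧
        (∃ (m : ℕ) (τ : Fin (m + 2) → ℝ), StrictMono τ ∧ τ 0 = 0 ∧ τ (Fin.last (m + 1)) = 1 ∧
          ∀ i : Fin (m + 1), ContDiffOn ℝ 1 σ (Set.Icc (τ i.castSucc) (τ i.succ))) ∧
        L = ∫ t in (0 : ℝ)..1, finslerNorm C (σ t) (deriv σ t)},
       hilbertDist C p q ≤ L := by
      rintro L ⟨σ, h0, h1, hmemσ, hcontσ, ⟨m, τ, hτm, hτa, hτb, hpcσ⟩, rfl⟩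
      set v := q - p with hvdef
      set α := sInf (chord C p v) with hα
      set β := sSup (chord C p v) with hβ
      have hαneg : α < 0 := sInf_chord_neg hopen hbdd hp hv
      have hβ1 : 1 < β := one_lt_sSup_chord hopen hbdd hq hpq
      obtain ⟨f, hf⟩ := geometric_hahn_banach_open_point hconv hopen
        (sInf_chord_not_mem hopen hbdd hp hv)
      obtain ⟨f', hf'⟩ := geometric_hahn_banach_open_point hconv hopen
        (sSup_chord_not_mem hopen hbdd hp hv)
      set c₁ := f (p + α • v) with hc₁
      set c₂ := f' (p + β • v) with hc₂
      have h₁ : ∀ y ∈ C, 0 < (-f) y + c₁ := by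
        intro y hy
        have := hf y hy
        simp only [ContinuousLinearMap.neg_apply]
        rw [hc₁]; linarith
      have h₂ : ∀ y ∈ C, 0 < (-f') y + c₂ := by
        intro y hy
        have := hf' y hy
        simp only [ContinuousLinearMap.neg_apply]
        rw [hc₂]; linarith
      have hkey := path_lower_bound hconv hopen hbdd (-f) (-f') c₁ c₂ h₁ h₂
        hmemσ hτm hτa hτb hpcσ
      rw [h0, h1] at hkey
      have hqpv : q = p + v := by rw [hvdef]; abel
      have hfa : c₁ = f p + α * f v := by rw [hc₁, map_add, _root_.map_smul, smul_eq_mul]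
      have hfb : c₂ = f' p + β * f' v := by rw [hc₂, map_add, _root_.map_smul, smul_eq_mul]
      have hℓ₁p : (-f) p + c₁ = (-α) * (-(f v)) := by
        simp only [ContinuousLinearMap.neg_apply]; rw [hfa]; ring
      have hℓ₁q : (-f) q + c₁ = (1 - α) * (-(f v)) := by
        simp only [ContinuousLinearMap.neg_apply]
        rw [hqpv, map_add, hfa]; ring
      have hℓ₂p : (-f') p + c₂ = β * (f' v) := by
        simp only [ContinuousLinearMap.neg_apply]; rw [hfb]; ring
      have hℓ₂q : (-f') q + c₂ = (β - 1) * (f' v) := by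
        simp only [ContinuousLinearMap.neg_apply]
        rw [hqpv, map_add, hfb]; ring
      have hp₁pos : 0 < (-f) p + c₁ := h₁ p hp
      have hp₂pos : 0 < (-f') p + c₂ := h₂ p hp
      have hnfv : 0 < -(f v) := by
        rw [hℓ₁p] at hp₁pos; nlinarith
      have hf'v : 0 < f' v := by
        rw [hℓ₂p] at hp₂pos; nlinarith
      have e1 : Real.log ((-f) q + c₁) - Real.log ((-f) p + c₁)
          = Real.log (1 - α) - Real.log (-α) := by
        rw [hℓ₁q, hℓ₁p,
          Real.log_mul (by linarith : (1:ℝ) - α ≠ 0) (ne_of_gt hnfv),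
          Real.log_mul (by linarith : -α ≠ 0) (ne_of_gt hnfv)]
        ring
      have e2 : Real.log ((-f') p + c₂) - Real.log ((-f') q + c₂)
          = Real.log β - Real.log (β - 1) := by
        rw [hℓ₂p, hℓ₂q,
          Real.log_mul (by linarith : β ≠ 0) (ne_of_gt hf'v),
          Real.log_mul (by linarith : β - 1 ≠ 0) (ne_of_gt hf'v)]
        ring
      rw [hd]
      linarith [hkey, e1, e2]
    exact le_antisymm (le_csInf ⟨_, hmemS⟩ hlb) (csInf_le ⟨_, hlb⟩ hmemS)
end Main

end HP

/-- The Hilbert distance of a bounded open convex set `C ⊆ ℝⁿ` is the length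
distance associated to its Finsler metric: `d_C(p,q)` is the infimum of the lengths
`∫₀¹ F_C(σ(t), σ'(t)) dt` over all piecewise `C¹` paths `σ : [0,1] → C` from `p` to `q`. -/
theorem hilbertDist_eq_length_distance {n : ℕ} (C : Set (EuclideanSpace ℝ (Fin n)))
    (hconv : Convex ℝ C) (hopen : IsOpen C) (hbdd : Bornology.IsBounded C)
    (p q : EuclideanSpace ℝ (Fin n)) (hp : p ∈ C) (hq : q ∈ C) :
    hilbertDist C p q = sInf {L : ℝ |
      ∃ σ : ℝ → EuclideanSpace ℝ (Fin n),
        σ 0 = p ∧ σ 1 = q ∧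
        (∀ t ∈ Set.Icc (0 : ℝ) 1, σ t ∈ C) ∧
        ContinuousOn σ (Set.Icc (0 : ℝ) 1) ∧
        (∃ (m : ℕ) (τ : Fin (m + 2) → ℝ), StrictMono τ ∧ τ 0 = 0 ∧ τ (Fin.last (m + 1)) = 1 ∧
          ∀ i : Fin (m + 1), ContDiffOn ℝ 1 σ (Set.Icc (τ i.castSucc) (τ i.succ))) ∧
        L = ∫ t in (0 : ℝ)..1, finslerNorm C (σ t) (deriv σ t)} :=
  HP.hilbertDist_eq_length_distance' C hconv hopen hbdd p q hp hq
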